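/- Let P be a finite p-group of nilpotency class strictly less than p that is generated by elements of order dividing p, and suppose every element of the commutator subgroup [P,P] has order dividing p. Then every element of P has order dividing p. -/

import Mathlib

namespace Stmt1Collection

/-! ### Integer-valued polynomial sequences of bounded degree -/

/-- forward difference operator -/
def dd (u : ℕ → ℤ) : ℕ → ℤ := fun n => u (n + 1) - u n

/-- `u` is (the restriction of) an integer polynomial of degree ≤ k -/
def IsPolyLe (k : ℕ) (u : ℕ → ℤ) : Prop := dd^[k + 1] u = 0

lemma dd_zero : dd (0 : ℕ → ℤ) = 0 := by funext n; simp [dd]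

lemma IsPolyLe.step {k : ℕ} {u : ℕ → ℤ} (h : IsPolyLe k u) : IsPolyLe (k + 1) u := by
  unfold IsPolyLe at *
  rw [Function.iterate_succ_apply', h, dd_zero]

lemma IsPolyLe.mono {k k' : ℕ} (hk : k ≤ k') {u : ℕ → ℤ} (h : IsPolyLe k u) :
    IsPolyLe k' u := by
  induction k', hk using Nat.le_induction with
  | base => exact h
  | succ n hn ih => exact ih.step

lemma IsPolyLe.diff {k : ℕ} {u : ℕ → ℤ} (h : IsPolyLe (k + 1) u) : IsPolyLe k (dd u) := by
  unfold IsPolyLe at *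
  rwa [← Function.iterate_succ_apply]

lemma IsPolyLe.dd_eq_zero {u : ℕ → ℤ} (h : IsPolyLe 0 u) : dd u = 0 := h

lemma isPolyLe_const (c : ℤ) : IsPolyLe 0 (fun _ => c) := by
  unfold IsPolyLe
  funext n; simp [dd]

lemma isPolyLe_natCast : IsPolyLe 1 (fun n => (n : ℤ)) := by
  have h1 : dd (fun n => (n : ℤ)) = fun _ => 1 := by
    funext n; simp [dd]
  unfold IsPolyLe
  rw [show (1 + 1 : ℕ) = 1 + 1 from rfl, Function.iterate_succ_apply, h1]
  have := isPolyLe_const 1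
  unfold IsPolyLe at this
  simpa using this

lemma isPolyLe_choose (k : ℕ) : IsPolyLe k (fun n => (n.choose k : ℤ)) := by
  induction k with
  | zero => simpa using isPolyLe_const 1
  | succ k ih =>
    have h1 : dd (fun n => (n.choose (k+1) : ℤ)) = fun n => (n.choose k : ℤ) := by
      funext n
      simp only [dd, Nat.choose_succ_succ' n k]
      push_cast
      ring
    unfold IsPolyLe
    rw [Function.iterate_succ_apply, h1]
    exact ih

/-! ### Commutator calculus for the lower central series -/

open scoped commutatorElement

abbrev lowerCentralSeries (G : Type*) [Group G] (n : ℕ) : Subgroup G :=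
  (⊤ : Subgroup G).lowerCentralSeries n

lemma lowerCentralSeries_zero {G : Type*} [Group G] : lowerCentralSeries G 0 = ⊤ := rfl

lemma lowerCentralSeries_antitone {G : Type*} [Group G] : Antitone (lowerCentralSeries G) :=
  Subgroup.lowerCentralSeries_antitone _

variable {G : Type*} [Group G]

/-- general form of the three subgroups lemma -/
lemma lcs_succ' (n : ℕ) :
    lowerCentralSeries G (n + 1) = ⁅lowerCentralSeries G n, ⊤⁆ := rfl

lemma three_subgroups_le {A B C N : Subgroup G} [N.Normal]
    (h1 : ⁅⁅B, C⁆, A⁆ ≤ N) (h2 : ⁅⁅C, A⁆, B⁆ ≤ N) : ⁅⁅A, B⁆, C⁆ ≤ N := by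
  have key : ∀ X Y Z : Subgroup G, ⁅⁅X, Y⁆, Z⁆ ≤ N ↔
      ⁅⁅Subgroup.map (QuotientGroup.mk' N) X, Subgroup.map (QuotientGroup.mk' N) Y⁆,
        Subgroup.map (QuotientGroup.mk' N) Z⁆ = ⊥ := by
    intro X Y Z
    rw [← Subgroup.map_commutator, ← Subgroup.map_commutator, Subgroup.map_eq_bot_iff,
      QuotientGroup.ker_mk']
  rw [key] at h1 h2 ⊢
  exact Subgroup.commutator_commutator_eq_bot_of_rotate h1 h2

lemma lcs_comm_le : ∀ i j : ℕ,
    ⁅lowerCentralSeries G i, lowerCentralSeries G j⁆ ≤ lowerCentralSeries G (i + j + 1) := by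
  intro i
  induction i with
  | zero =>
    intro j
    rw [lowerCentralSeries_zero, Subgroup.commutator_comm, ← lcs_succ']
    exact lowerCentralSeries_antitone (by omega)
  | succ i ih =>
    intro j
    rw [lcs_succ']
    apply three_subgroups_le
    · have hTj : ⁅(⊤ : Subgroup G), lowerCentralSeries G j⁆ = lowerCentralSeries G (j + 1) := by
        rw [Subgroup.commutator_comm, ← lcs_succ']
      rw [hTj, Subgroup.commutator_comm]
      exact (ih (j + 1)).trans (lowerCentralSeries_antitone (by omega))
    · rw [Subgroup.commutator_comm (lowerCentralSeries G j)]
      refine (Subgroup.commutator_mono (ih j) le_rfl).trans ?_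
      rw [← lcs_succ']
      exact lowerCentralSeries_antitone (by omega)

/-- the lower central series, reindexed so that `L 0 = L 1 = G`, `L 2 = [G,G]`, ... -/
def L (G : Type*) [Group G] (k : ℕ) : Subgroup G := lowerCentralSeries G (k - 1)

lemma L_anti {s t : ℕ} (h : s ≤ t) : L G t ≤ L G s :=
  lowerCentralSeries_antitone (Nat.sub_le_sub_right h 1)

instance L_normal (k : ℕ) : (L G k).Normal := by
  unfold L; infer_instance

lemma commL (s t : ℕ) : ⁅L G s, L G t⁆ ≤ L G (s + t) := by
  rcases Nat.eq_zero_or_pos s with rfl | hs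
  · have h : ⁅L G 0, L G t⁆ ≤ L G t := by
      rw [show L G 0 = ⊤ from rfl, Subgroup.commutator_comm]
      show ⁅lowerCentralSeries G (t - 1), ⊤⁆ ≤ lowerCentralSeries G (t - 1)
      rw [← lcs_succ']
      exact lowerCentralSeries_antitone (by omega)
    simpa using h
  rcases Nat.eq_zero_or_pos t with rfl | ht
  · have h : ⁅L G s, L G 0⁆ ≤ L G s := by
      rw [show L G 0 = ⊤ from rfl]
      show ⁅lowerCentralSeries G (s - 1), ⊤⁆ ≤ lowerCentralSeries G (s - 1)
      rw [← lcs_succ']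
      exact lowerCentralSeries_antitone (by omega)
    simpa using h
  · refine (lcs_comm_le (s - 1) (t - 1)).trans (lowerCentralSeries_antitone (by omega))


/-! ### Polynomial sequences in a group, adapted to the lower central series -/

variable (G) in
/-- the difference operator on sequences in `G` -/
def D (f : ℕ → G) : ℕ → G := fun n => (f n)⁻¹ * f (n + 1)

/-- `W s f`: `f` is a polynomial sequence of "depth ≥ s". -/
inductive W : ℕ → (ℕ → G) → Prop
  | one (s : ℕ) : W s (fun _ => 1)
  | atom (s d : ℕ) (c : G) (u : ℕ → ℤ) (hc : c ∈ L G d) (hs : s ≤ d)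
      (hu : IsPolyLe (d - s) u) : W s (fun n => c ^ u n)
  | mul {s : ℕ} {f g : ℕ → G} : W s f → W s g → W s (fun n => f n * g n)
  | inv {s : ℕ} {f : ℕ → G} : W s f → W s (fun n => (f n)⁻¹)
  | conj {s t : ℕ} {f g : ℕ → G} : W s f → W t g → W s (fun n => (g n)⁻¹ * f n * g n)
  | comm {s t : ℕ} {f g : ℕ → G} : W s f → W t g → W (s + t) (fun n => ⁅f n, g n⁆)
  | shift {s : ℕ} {f : ℕ → G} : W s f → W s (fun n => f (n + 1))

lemma W.congr {s : ℕ} {f g : ℕ → G} (hf : W s f) (h : ∀ n, f n = g n) : W s g :=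
  (funext h : f = g) ▸ hf

lemma W.mono {s : ℕ} {f : ℕ → G} (hf : W s f) : ∀ {t : ℕ}, t ≤ s → W t f := by
  induction hf with
  | one s => exact fun _ => W.one _
  | atom s d c u hc hs hu =>
    exact fun hts => W.atom _ d c u hc (hts.trans hs) (hu.mono (Nat.sub_le_sub_left hts d))
  | mul _ _ ih₁ ih₂ => exact fun hts => W.mul (ih₁ hts) (ih₂ hts)
  | inv _ ih => exact fun hts => W.inv (ih hts)
  | conj _ h₂ ih₁ _ => exact fun hts => W.conj (ih₁ hts) h₂
  | @comm s t f g h₁ h₂ ih₁ ih₂ =>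
    intro r hr
    by_cases hrt : r ≤ t
    · have := W.comm (ih₁ (Nat.zero_le s)) (ih₂ hrt)
      simpa using this
    · push_neg at hrt
      have hrs : r - t ≤ s := by omega
      have := W.comm (ih₁ hrs) h₂
      rwa [Nat.sub_add_cancel hrt.le] at this
  | shift _ ih => exact fun hts => W.shift (ih hts)

lemma W.val {s : ℕ} {f : ℕ → G} (hf : W s f) : ∀ n, f n ∈ L G s := by
  induction hf with
  | one s => exact fun _ => one_mem _
  | atom s d c u hc hs hu => exact fun n => Subgroup.zpow_mem _ (L_anti hs hc) _
  | mul _ _ ih₁ ih₂ => exact fun n => mul_mem (ih₁ n) (ih₂ n)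
  | inv _ ih => exact fun n => inv_mem (ih n)
  | @conj s t f g _ _ ih₁ _ =>
    intro n
    have := (L_normal (G := G) s).conj_mem (f n) (ih₁ n) (g n)⁻¹
    simpa [mul_assoc] using this
  | comm _ _ ih₁ ih₂ =>
    exact fun n => commL _ _ (Subgroup.commutator_mem_commutator (ih₁ n) (ih₂ n))
  | shift _ ih => exact fun n => ih (n + 1)

lemma D_succ_eq {f : ℕ → G} (n : ℕ) : f (n + 1) = f n * D G f n := by
  simp [D]

/-- The key closure theorem: differencing raises depth by one. -/
lemma W.D_mem {s : ℕ} {f : ℕ → G} (hf : W s f) : W (s + 1) (D G f) := by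
  induction hf with
  | one s => exact (W.one (s+1)).congr (by intro n; simp [D])
  | atom s d c u hc hs hu =>
    have hDf : ∀ n, c ^ dd u n = D G (fun n => c ^ u n) n := by
      intro n
      simp only [D, dd, ← zpow_neg, ← zpow_add]
      congr 1
      ring
    rcases eq_or_lt_of_le hs with rfl | hlt
    · have h0 : IsPolyLe 0 u := by simpa using hu
      have hz : dd u = 0 := h0.dd_eq_zero
      refine (W.one (s+1)).congr (fun n => ?_)
      rw [← hDf n, hz]
      simp
    · have hu' : IsPolyLe (d - (s + 1)) (dd u) := by
        have : d - s = (d - (s+1)) + 1 := by omega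
        rw [this] at hu
        exact hu.diff
      exact (W.atom (s+1) d c (dd u) hc hlt hu').congr hDf
  | @mul s f g h₁ h₂ ih₁ ih₂ =>
    refine (W.mul (W.conj ih₁ h₂) ih₂).congr (fun n => ?_)
    show (g n)⁻¹ * D G f n * g n * D G g n = _
    simp only [D]
    group
  | @inv s f h₁ ih =>
    refine (W.conj (W.inv ih) (W.inv h₁)).congr (fun n => ?_)
    show ((f n)⁻¹)⁻¹ * (D G f n)⁻¹ * (f n)⁻¹ = _
    simp only [D]
    group
  | @conj s t f g h₁ h₂ ih₁ ih₂ =>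
    -- β := g * Dg * g⁻¹
    have hβ : W (t+1) (fun n => ((g n)⁻¹)⁻¹ * D G g n * (g n)⁻¹) := W.conj ih₂ (W.inv h₂)
    have hA : W (s+1) (fun n => ⁅(f n)⁻¹, (((g n)⁻¹)⁻¹ * D G g n * (g n)⁻¹)⁻¹⁆) :=
      (W.comm (W.inv h₁) (W.inv hβ)).mono (by omega)
    have hB : W (s+1)
        (fun n => (((g n)⁻¹)⁻¹ * D G g n * (g n)⁻¹)⁻¹ * D G f n *
          (((g n)⁻¹)⁻¹ * D G g n * (g n)⁻¹)) := W.conj ih₁ hβ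
    refine (W.conj (W.mul hA hB) h₂).congr (fun n => ?_)
    simp only [D, commutatorElement_def]
    group
  | @comm s t f g h₁ h₂ ih₁ ih₂ =>
    -- D⁅f,g⁆ = ((⁅Df,g⁆ * (⁅Df,Dg⁆)^{g⁻¹}))^{f⁻¹⁅f,g⁆} * (⁅f,Dg⁆)^{g⁻¹}
    have hQ : W (s + t + 1)
        (fun n => ⁅D G f n, g n⁆ * (((g n)⁻¹)⁻¹ * ⁅D G f n, D G g n⁆ * (g n)⁻¹)) :=
      W.mul ((W.comm ih₁ h₂).mono (by omega))
        ((W.conj (W.comm ih₁ ih₂) (W.inv h₂)).mono (by omega))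
    have hR : W 0 (fun n => (f n)⁻¹ * ⁅f n, g n⁆) :=
      W.mul ((W.inv h₁).mono (Nat.zero_le _)) ((W.comm h₁ h₂).mono (Nat.zero_le _))
    have hlast : W (s + t + 1) (fun n => ((g n)⁻¹)⁻¹ * ⁅f n, D G g n⁆ * (g n)⁻¹) :=
      (W.conj (W.comm h₁ ih₂) (W.inv h₂)).mono (by omega)
    refine (W.mul (W.conj hQ hR) hlast).congr (fun n => ?_)
    simp only [D, commutatorElement_def]
    group
  | shift h₁ ih =>
    exact (W.shift ih).congr (fun n => by simp [D])


lemma W.iterD {s : ℕ} {f : ℕ → G} (hf : W s f) : ∀ k, W (s + k) ((D G)^[k] f) := by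
  intro k
  induction k with
  | zero => simpa using hf
  | succ k ih =>
    rw [Function.iterate_succ_apply']
    exact ih.D_mem

lemma W.shift_add {s : ℕ} {f : ℕ → G} (hf : W s f) (m : ℕ) : W s (fun j => f (j + m)) := by
  induction m with
  | zero => exact hf.congr (by simp)
  | succ m ih => exact (W.shift ih).congr (fun n => by congr 1; omega)

lemma D_iter_eval {f : ℕ → G} : ∀ k, (∀ j < k, f j = 1) → (D G)^[k] f 0 = f k := by
  intro k
  induction k generalizing f with
  | zero => simp
  | succ k ih =>
    intro hv
    rw [Function.iterate_succ_apply]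
    have hv' : ∀ j < k, D G f j = 1 := by
      intro j hj
      simp [D, hv j (by omega), hv (j+1) (by omega)]
    rw [ih hv', D, hv k (by omega)]
    simp

/-- a polynomial sequence vanishing through the nilpotency length vanishes identically. -/
lemma W.all_one {C : ℕ} (hbot : lowerCentralSeries G C = ⊥) {f : ℕ → G}
    (hf : W 0 f) (hv : ∀ j ≤ C, f j = 1) : ∀ n, f n = 1 := by
  intro n
  induction n using Nat.strong_induction_on with
  | _ n ih =>
    by_cases hn : n ≤ C
    · exact hv n hn
    · push_neg at hn
      set m := n - (C + 1) with hm
      have hfm : W 0 (fun j => f (j + m)) := hf.shift_add m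
      have hvm : ∀ j < C + 1, f (j + m) = 1 := by
        intro j hj
        exact ih (j + m) (by omega)
      have hmem : (D G)^[C+1] (fun j => f (j + m)) 0 ∈ L G (0 + (C + 1)) :=
        (hfm.iterD (C+1)).val 0
      rw [D_iter_eval (C+1) hvm] at hmem
      have hLbot : L G (0 + (C + 1)) = ⊥ := by
        show lowerCentralSeries G (0 + (C + 1) - 1) = ⊥
        simpa using hbot
      rw [hLbot, Subgroup.mem_bot] at hmem
      have : C + 1 + m = n := by omega
      rwa [this] at hmem

/-- Main collection estimate: a depth-0 polynomial sequence vanishing below `k` (k ≥ 2)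
takes the value 1 at any prime `p` exceeding the nilpotency class, provided commutators
have exponent dividing `p`. -/
lemma claim {p C : ℕ} (hp : p.Prime) (hC : C < p)
    (hbot : lowerCentralSeries G C = ⊥) (hcomm : ∀ x ∈ commutator G, x ^ p = 1) :
    ∀ m k (f : ℕ → G), 2 ≤ k → C + 1 ≤ k + m → W 0 f → (∀ j < k, f j = 1) → f p = 1 := by
  intro m
  induction m with
  | zero =>
    intro k f hk hCk hf hv
    exact hf.all_one hbot (fun j hj => hv j (by omega)) p
  | succ m ih =>
    intro k f hk hCk hf hv
    by_cases hbase : C + 1 ≤ k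
    · exact hf.all_one hbot (fun j hj => hv j (by omega)) p
    · push_neg at hbase
      have hkC : k ≤ C := by omega
      -- the k-th Taylor coefficient
      set g := f k with hg
      have hgL : g ∈ L G k := by
        have hmem := (hf.iterD k).val 0
        rwa [D_iter_eval k hv, zero_add] at hmem
      have hatom : W 0 (fun n => g ^ ((n.choose k : ℤ))) := by
        refine W.atom 0 k g _ hgL (Nat.zero_le _) ?_
        simpa using isPolyLe_choose k
      have hf' : W 0 (fun n => (g ^ ((n.choose k : ℤ)))⁻¹ * f n) :=
        W.mul (W.inv hatom) hf
      have hv' : ∀ j < k + 1, (g ^ ((j.choose k : ℤ)))⁻¹ * f j = 1 := by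
        intro j hj
        rcases Nat.lt_or_ge j k with hjk | hjk
        · rw [Nat.choose_eq_zero_of_lt hjk, hv j hjk]
          simp
        · have : j = k := by omega
          subst this
          rw [Nat.choose_self]
          simp [← hg]
      have hfp' := ih (k+1) _ (by omega) (by omega) hf' hv'
      have hfp : f p = g ^ ((p.choose k : ℤ)) := (inv_mul_eq_one.mp hfp').symm
      -- kill the coefficient: g ∈ [G,G] has order dividing p, and p ∣ choose p k
      have hgcomm : g ∈ commutator G := by
        have h2 : L G k ≤ L G 2 := L_anti hk
        have : L G 2 = commutator G := by
          show lowerCentralSeries G (2-1) = commutator G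
          simp
          rfl
        exact this ▸ h2 hgL
      have hgp : g ^ (p : ℤ) = 1 := by
        rw [zpow_natCast]
        exact hcomm g hgcomm
      obtain ⟨c, hc⟩ := hp.dvd_choose_self (show k ≠ 0 by omega) (show k < p by omega)
      rw [hfp, hc]
      push_cast
      rw [zpow_mul, hgp, one_zpow]

/-- Hall-Petrescu consequence: in a group of class `< p` whose commutator subgroup has
exponent dividing `p`, the `p`-th power map is multiplicative. -/
lemma key_pow_mul {p C : ℕ} (hp : p.Prime) (hC : C < p)
    (hbot : lowerCentralSeries G C = ⊥) (hcomm : ∀ x ∈ commutator G, x ^ p = 1)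
    (a b : G) : (a * b) ^ p = a ^ p * b ^ p := by
  set f : ℕ → G := fun n => (a * b) ^ n * (b⁻¹) ^ n * (a⁻¹) ^ n with hfdef
  have hattop : ∀ c : G, W 0 (fun n => c ^ n) := by
    intro c
    refine (W.atom 0 1 c (fun n => (n : ℤ)) ?_ (by omega) ?_).congr (fun n => ?_)
    · show c ∈ lowerCentralSeries G 0
      simp
    · simpa using isPolyLe_natCast
    · exact zpow_natCast c n
  have hf : W 0 f := W.mul (W.mul (hattop (a*b)) (hattop b⁻¹)) (hattop a⁻¹)
  have hv : ∀ j < 2, f j = 1 := by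
    intro j hj
    interval_cases j
    · simp [hfdef]
    · simp only [hfdef, pow_one]
      group
  have hfp : f p = 1 := claim hp hC hbot hcomm C 2 f le_rfl (by omega) hf hv
  have h1 : (a * b) ^ p * (b⁻¹) ^ p * (a⁻¹) ^ p = 1 := hfp
  rw [inv_pow, inv_pow, mul_inv_eq_one, mul_inv_eq_iff_eq_mul] at h1
  exact h1

end Stmt1Collection

/-- Hall's commutator-collection consequence: a finite `p`-group of nilpotency class `< p`,
generated by elements of order dividing `p`, all of whose commutators have order dividing `p`,
has exponent `p`. -/
theorem stmt1 {P : Type*} [Group P] [Finite P] (p : ℕ) (hp : p.Prime)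
    (hP : IsPGroup p P) [Group.IsNilpotent P]
    (hclass : Group.nilpotencyClass P < p)
    (hgen : Subgroup.closure {x : P | x ^ p = 1} = ⊤)
    (hcomm : ∀ x ∈ commutator P, x ^ p = 1) :
    ∀ x : P, x ^ p = 1 := by
  have hbot : Stmt1Collection.lowerCentralSeries P (Group.nilpotencyClass P) = ⊥ :=
    Subgroup.lowerCentralSeries_nilpotencyClass
  have key : ∀ a b : P, (a * b) ^ p = a ^ p * b ^ p :=
    Stmt1Collection.key_pow_mul hp hclass hbot hcomm
  let S : Subgroup P :=
    { carrier := {x : P | x ^ p = 1}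
      one_mem' := one_pow p
      mul_mem' := by
        intro a b ha hb
        show (a * b) ^ p = 1
        rw [key a b, ha, hb, one_mul]
      inv_mem' := by
        intro a ha
        show (a⁻¹) ^ p = 1
        rw [inv_pow, ha, inv_one] }
  have hle : (⊤ : Subgroup P) ≤ S := by
    rw [← hgen]
    exact (Subgroup.closure_le S).mpr (fun x hx => hx)
  exact fun x => hle (Subgroup.mem_top x)
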